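/- Suppose f belongs to the class of structured problems in the special case L(·) ≡ L > 0 and δ(·) ≡ δ ≥ 0. Then any sequence {(z_{k−1}, x_k, x̂_k)}_{k≥0} generated by the fast gradient method with parameters λ_k := (k+1)/2 and β_k := L/σ satisfies, for all k ≥ 0, f(x̂_k) − f(x*) ≤ 4 L l_d(z_k; x*)/(σ(k+1)(k+2)) + ((k+3)/3) δ, and for all k ≥ −1 the points z_k, x_{k+1}, x̂_k lie in the set { x ∈ Q : ‖x − x*‖² ≤ 2 d(x*)/σ + (δ/(6L))(k+1)(k+2)(k+3) }. -/

import Mathlib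

open Finset

/-- Convex-combination membership + squared-norm bound helper. -/
lemma fgm_comb_sq_bound {E : Type*} [NormedAddCommGroup E] [NormedSpace ℝ E]
    (s : Finset ℕ) (w : ℕ → ℝ) (v : ℕ → E) (c : E) (R : ℝ) (hR : 0 ≤ R)
    (hw : ∀ i ∈ s, 0 ≤ w i) (h1 : ∑ i ∈ s, w i = 1)
    (hv : ∀ i ∈ s, ‖v i - c‖ ^ 2 ≤ R) :
    ‖(∑ i ∈ s, w i • v i) - c‖ ^ 2 ≤ R := by
  have hd : (∑ i ∈ s, w i • v i) - c = ∑ i ∈ s, w i • (v i - c) := by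
    simp [smul_sub, Finset.sum_sub_distrib, ← Finset.sum_smul, h1]
  rw [hd]
  have hn : ‖∑ i ∈ s, w i • (v i - c)‖ ≤ Real.sqrt R := by
    calc ‖∑ i ∈ s, w i • (v i - c)‖ ≤ ∑ i ∈ s, ‖w i • (v i - c)‖ := norm_sum_le _ _
      _ = ∑ i ∈ s, w i * ‖v i - c‖ := Finset.sum_congr rfl fun i hi => by
          rw [norm_smul, Real.norm_eq_abs, abs_of_nonneg (hw i hi)]
      _ ≤ ∑ i ∈ s, w i * Real.sqrt R := Finset.sum_le_sum fun i hi =>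
          mul_le_mul_of_nonneg_left
            ((Real.le_sqrt (norm_nonneg _) hR).mpr (hv i hi)) (hw i hi)
      _ = Real.sqrt R := by rw [← Finset.sum_mul, h1, one_mul]
  calc ‖∑ i ∈ s, w i • (v i - c)‖ ^ 2 ≤ (Real.sqrt R) ^ 2 :=
        pow_le_pow_left₀ (norm_nonneg _) hn 2
    _ = R := Real.sq_sqrt hR

/-- Pure arithmetic for the inductive step of the estimate-sequence argument. -/
lemma fgm_step_arith (Sk Sk1 lam1 Ck L N N' p q F F' G G' H δ : ℝ)
    (hSk : 0 ≤ Sk) (hδ : 0 ≤ δ)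
    (h1 : p + lam1 * H + L / 2 * N ≤ q)
    (h2 : Sk * F - Ck * δ ≤ p)
    (h3 : G ≤ F)
    (h4 : Sk1 * G' ≤ Sk * G + lam1 * H)
    (h5 : Sk1 * F' ≤ Sk1 * G' + L / 2 * N' + Sk1 * δ)
    (hN' : L / 2 * N' ≤ L / 2 * N) :
    Sk1 * F' - (Ck + Sk1) * δ ≤ q := by
  have h6 : Sk * G ≤ Sk * F := mul_le_mul_of_nonneg_left h3 hSk
  nlinarith [h1, h2, h4, h5, h6, hN']

set_option maxHeartbeats 1000000 in
/-- Corollary 5.2 (b): the fast gradient method with `λ_k = (k+1)/2`, `β_k = L/σ` for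
structured problems with constant `L(·) ≡ L`, `δ(·) ≡ δ`: rate
`4L l_d(z_k;x*)/(σ(k+1)(k+2)) + (k+3)δ/3` and boundedness of the iterates.
(Indices shifted: `z n`, `β n` stand for the paper's `z_{n-1}`, `β_{n-1}`.) -/
theorem fast_gradient_method_constant_parameters
    {E : Type*} [NormedAddCommGroup E] [NormedSpace ℝ E] [FiniteDimensional ℝ E]
    (Q : Set E) (hQne : Q.Nonempty) (hQcl : IsClosed Q) (hQcv : Convex ℝ Q)
    (f : E → ℝ) (hf_cv : ConvexOn ℝ Q f) (hf_lsc : LowerSemicontinuousOn f Q)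
    (σ : ℝ) (hσ : 0 < σ)
    (d : E → ℝ) (d' : E → E →L[ℝ] ℝ)
    (hd_sc : StrongConvexOn Q σ d)
    (hd_diff : ∀ y ∈ Q, HasFDerivWithinAt d (d' y) Q y)
    (x₀ : E) (hx₀Q : x₀ ∈ Q) (hdx₀ : d x₀ = 0) (hd_nonneg : ∀ u ∈ Q, 0 ≤ d u)
    (hBreg : ∀ w ∈ Q, ∀ u ∈ Q, σ / 2 * ‖u - w‖ ^ 2 ≤ d u - d w - d' w (u - w))
    (lam : ℕ → ℝ) (hlam : ∀ k, 0 < lam k)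
    (β : ℕ → ℝ) (hβ0 : 0 < β 0) (hβmono : ∀ k, β k ≤ β (k + 1))
    (x : ℕ → E) (hxQ : ∀ k, x k ∈ Q)
    (ψ : ℕ → E → ℝ) (z : ℕ → E)
    (hzQ : ∀ n, z n ∈ Q) (hzmin : ∀ n, ∀ u ∈ Q, ψ n (z n) ≤ ψ n u)
    (lf : E → E → ℝ) (Lc δc : ℝ) (hLc : 0 < Lc) (hδc : 0 ≤ δc)
    (hlf_cv : ∀ y ∈ Q, ConvexOn ℝ Q (lf y))
    (hlf_lsc : ∀ y ∈ Q, LowerSemicontinuousOn (lf y) Q)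
    (hlf_lb : ∀ y ∈ Q, ∀ u ∈ Q, lf y u ≤ f u)
    (hlf_ub : ∀ y ∈ Q, ∀ u ∈ Q, f u ≤ lf y u + Lc / 2 * ‖u - y‖ ^ 2 + δc)
    (hP1a : ψ 0 (z 0) = 0) (hP1b : z 0 = x₀)
    (hP2 : ∀ n : ℕ, ∀ u ∈ Q,
      ψ n (z n) + lam n * lf (x n) u + β (n + 1) * d u
        - β n * (d (z n) + d' (z n) (u - z n)) ≤ ψ (n + 1) u)
    (hP3 : ∀ k : ℕ, ∀ u ∈ Q,
      ψ (k + 1) (z (k + 1)) ≤ (∑ i ∈ Finset.range (k + 1), lam i * lf (x i) u)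
        + β (k + 1) * (d (z (k + 1)) + d' (z (k + 1)) (u - z (k + 1))))
    (xs : E) (hxsQ : xs ∈ Q) (hxs_opt : ∀ u ∈ Q, f xs ≤ f u)
    (xhat : ℕ → E)
    (hlamk : ∀ k : ℕ, lam k = ((k : ℝ) + 1) / 2) (hβL : ∀ n, β n = Lc / σ)
    (hmx0 : x 0 = z 0)
    (hmx : ∀ k : ℕ, x (k + 1) = (∑ i ∈ Finset.range (k + 2), lam i)⁻¹ •
        ((∑ i ∈ Finset.range (k + 1), lam i • z (i + 1)) + lam (k + 1) • z (k + 1)))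
    (hmxhat : ∀ k, xhat k = (∑ i ∈ Finset.range (k + 1), lam i)⁻¹ • ∑ i ∈ Finset.range (k + 1), lam i • z (i + 1)) :
    (∀ k : ℕ,
      f (xhat k) - f xs ≤
        4 * Lc * (d (z (k + 1)) + d' (z (k + 1)) (xs - z (k + 1)))
          / (σ * ((k : ℝ) + 1) * ((k : ℝ) + 2)) + ((k : ℝ) + 3) / 3 * δc)
    ∧ (∀ n : ℕ,
      (z n ∈ Q ∧ ‖z n - xs‖ ^ 2 ≤
        2 * d xs / σ + δc / (6 * Lc) * ((n : ℝ) * ((n : ℝ) + 1) * ((n : ℝ) + 2))) ∧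
      (x n ∈ Q ∧ ‖x n - xs‖ ^ 2 ≤
        2 * d xs / σ + δc / (6 * Lc) * ((n : ℝ) * ((n : ℝ) + 1) * ((n : ℝ) + 2))))
    ∧ (∀ k : ℕ,
      xhat k ∈ Q ∧ ‖xhat k - xs‖ ^ 2 ≤
        2 * d xs / σ + δc / (6 * Lc) * (((k : ℝ) + 1) * ((k : ℝ) + 2) * ((k : ℝ) + 3))) := by
  -- closed form of the partial sums of λ
  have hSval : ∀ k : ℕ, (∑ i ∈ Finset.range (k + 1), lam i)
      = ((k : ℝ) + 1) * ((k : ℝ) + 2) / 4 := by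
    intro k
    induction k with
    | zero => simp [hlamk 0]; norm_num
    | succ n ih =>
      rw [Finset.sum_range_succ, ih, hlamk (n + 1)]
      push_cast; ring
  have hSpos : ∀ k : ℕ, (0:ℝ) < ∑ i ∈ Finset.range (k + 1), lam i := by
    intro k
    rw [hSval]
    positivity
  -- xhat as a convex combination
  have hxhat_comb : ∀ k : ℕ, xhat k
      = ∑ i ∈ Finset.range (k + 1), (lam i / ∑ j ∈ Finset.range (k + 1), lam j) • z (i + 1) := by
    intro k
    rw [hmxhat k, Finset.smul_sum]
    refine Finset.sum_congr rfl fun i _ => ?_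
    rw [smul_smul, ← div_eq_inv_mul]
  have hwsum : ∀ k : ℕ,
      ∑ i ∈ Finset.range (k + 1), (lam i / ∑ j ∈ Finset.range (k + 1), lam j) = 1 := by
    intro k
    rw [← Finset.sum_div, div_self (hSpos k).ne']
  have hxhatQ : ∀ k : ℕ, xhat k ∈ Q := by
    intro k
    rw [hxhat_comb k]
    exact hQcv.sum_mem (fun i _ => div_nonneg (hlam i).le (hSpos k).le) (hwsum k)
      (fun i _ => hzQ (i + 1))
  -- the single-step inequality with the strong convexity of d folded in
  have hstep : ∀ n : ℕ, ∀ u ∈ Q,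
      ψ n (z n) + lam n * lf (x n) u + Lc / 2 * ‖u - z n‖ ^ 2 ≤ ψ (n + 1) u := by
    intro n u hu
    have h2 := hP2 n u hu
    rw [hβL n, hβL (n + 1)] at h2
    have hb := hBreg (z n) (hzQ n) u hu
    have hfrac : (0:ℝ) ≤ Lc / σ := div_nonneg hLc.le hσ.le
    have h3 := mul_le_mul_of_nonneg_left hb hfrac
    have e1 : Lc / σ * (σ / 2 * ‖u - z n‖ ^ 2) = Lc / 2 * ‖u - z n‖ ^ 2 := by
      field_simp
    have e2 : Lc / σ * (d u - d (z n) - (d' (z n)) (u - z n))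
        = Lc / σ * d u - Lc / σ * (d (z n) + (d' (z n)) (u - z n)) := by ring
    rw [e1, e2] at h3
    linarith
  -- xhat recursion facts
  have hSsucc : ∀ k : ℕ, (∑ i ∈ Finset.range (k + 2), lam i)
      = (∑ i ∈ Finset.range (k + 1), lam i) + lam (k + 1) := fun k =>
    Finset.sum_range_succ lam (k + 1)
  have hsum_shift : ∀ k : ℕ, (∑ i ∈ Finset.range (k + 1), lam i • z (i + 1))
      = (∑ i ∈ Finset.range (k + 1), lam i) • xhat k := by
    intro k
    rw [hmxhat k, smul_smul, mul_inv_cancel₀ (hSpos k).ne', one_smul]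
  have hxhat_rec : ∀ k : ℕ, xhat (k + 1)
      = ((∑ i ∈ Finset.range (k + 1), lam i) / ∑ i ∈ Finset.range (k + 2), lam i) • xhat k
        + (lam (k + 1) / ∑ i ∈ Finset.range (k + 2), lam i) • z (k + 2) := by
    intro k
    rw [hmxhat (k + 1), Finset.sum_range_succ (fun i => lam i • z (i + 1)) (k + 1),
      hsum_shift k, smul_add, smul_smul, smul_smul, ← div_eq_inv_mul, ← div_eq_inv_mul]
  have hdiff : ∀ k : ℕ, xhat (k + 1) - x (k + 1)
      = (lam (k + 1) / ∑ i ∈ Finset.range (k + 2), lam i) • (z (k + 2) - z (k + 1)) := by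
    intro k
    rw [hmxhat (k + 1), Finset.sum_range_succ (fun i => lam i • z (i + 1)) (k + 1), hmx k,
      ← smul_sub, add_sub_add_left_eq_sub, ← smul_sub, smul_smul, ← div_eq_inv_mul]
  -- main estimate-sequence lower bound
  have hmain : ∀ k : ℕ,
      ((k : ℝ) + 1) * ((k : ℝ) + 2) / 4 * f (xhat k)
        - ((k : ℝ) + 1) * ((k : ℝ) + 2) * ((k : ℝ) + 3) / 12 * δc
        ≤ ψ (k + 1) (z (k + 1)) := by
    intro k
    induction k with
    | zero =>
      have hx1 : xhat 0 = z 1 := by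
        rw [hmxhat 0]
        simp [Finset.sum_range_one, smul_smul, inv_mul_cancel₀ (hlam 0).ne']
      have h1 := hstep 0 (z 1) (hzQ 1)
      rw [hP1a] at h1
      have h2 := hlf_ub (x 0) (hxQ 0) (z 1) (hzQ 1)
      rw [hmx0] at h1 h2
      have hl0 : lam 0 = 1 / 2 := by rw [hlamk 0]; norm_num
      rw [hl0] at h1
      rw [hx1]
      have hnn : 0 ≤ Lc / 2 * ‖z 1 - z 0‖ ^ 2 := by positivity
      norm_num
      nlinarith [h1, h2, hnn]
    | succ k ih =>
      -- notation
      set Sk : ℝ := ∑ i ∈ Finset.range (k + 1), lam i with hSk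
      set Sk1 : ℝ := ∑ i ∈ Finset.range (k + 2), lam i with hSk1
      have hSkpos := hSpos k
      have hSk1pos := hSpos (k + 1)
      have ha : (0:ℝ) ≤ Sk / Sk1 := div_nonneg hSkpos.le hSk1pos.le
      have hb : (0:ℝ) ≤ lam (k + 1) / Sk1 := div_nonneg (hlam (k + 1)).le hSk1pos.le
      have hab : Sk / Sk1 + lam (k + 1) / Sk1 = 1 := by
        rw [← add_div, ← hSsucc k, div_self hSk1pos.ne']
      -- convexity of the model
      have hcv := (hlf_cv (x (k + 1)) (hxQ (k + 1))).2 (hxhatQ k) (hzQ (k + 2)) ha hb hab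
      rw [← hxhat_rec k] at hcv
      have h4 : Sk1 * lf (x (k + 1)) (xhat (k + 1))
          ≤ Sk * lf (x (k + 1)) (xhat k) + lam (k + 1) * lf (x (k + 1)) (z (k + 2)) := by
        have := mul_le_mul_of_nonneg_left hcv hSk1pos.le
        have e : Sk1 * (Sk / Sk1 * lf (x (k + 1)) (xhat k)
            + lam (k + 1) / Sk1 * lf (x (k + 1)) (z (k + 2)))
            = Sk * lf (x (k + 1)) (xhat k) + lam (k + 1) * lf (x (k + 1)) (z (k + 2)) := by
          field_simp
          exact mul_div_cancel_left₀ _ (hSk1pos.ne' : Sk1 ≠ 0)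
        linarith [e ▸ this]
      -- upper model bound at xhat (k+1)
      have h5' := hlf_ub (x (k + 1)) (hxQ (k + 1)) (xhat (k + 1)) (hxhatQ (k + 1))
      have hnorm : ‖xhat (k + 1) - x (k + 1)‖ ^ 2
          = (lam (k + 1) / Sk1) ^ 2 * ‖z (k + 2) - z (k + 1)‖ ^ 2 := by
        rw [hdiff k, norm_smul, mul_pow, Real.norm_eq_abs, sq_abs]
      rw [hnorm] at h5'
      have h5 : Sk1 * f (xhat (k + 1)) ≤ Sk1 * lf (x (k + 1)) (xhat (k + 1))
          + Lc / 2 * (Sk1 * (lam (k + 1) / Sk1) ^ 2 * ‖z (k + 2) - z (k + 1)‖ ^ 2)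
          + Sk1 * δc := by
        have := mul_le_mul_of_nonneg_left h5' hSk1pos.le
        nlinarith [this]
      have hN' : Lc / 2 * (Sk1 * (lam (k + 1) / Sk1) ^ 2 * ‖z (k + 2) - z (k + 1)‖ ^ 2)
          ≤ Lc / 2 * ‖z (k + 2) - z (k + 1)‖ ^ 2 := by
        have hS1' : Sk1 = ((k:ℝ) + 2) * ((k:ℝ) + 3) / 4 := by
          rw [hSk1, hSval (k + 1)]; push_cast; ring
        have hl1 : lam (k + 1) = ((k:ℝ) + 2) / 2 := by
          rw [hlamk (k + 1)]; push_cast; ring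
        have hc : Sk1 * (lam (k + 1) / Sk1) ^ 2 = ((k:ℝ) + 2) / ((k:ℝ) + 3) := by
          rw [hS1', hl1]
          have h2 : ((k:ℝ) + 2) ≠ 0 := by positivity
          have h3 : ((k:ℝ) + 3) ≠ 0 := by positivity
          field_simp
          ring
        rw [hc]
        have h1 : ((k:ℝ) + 2) / ((k:ℝ) + 3) ≤ 1 := by
          rw [div_le_one (by positivity)]
          linarith
        have hnn : (0:ℝ) ≤ ‖z (k + 2) - z (k + 1)‖ ^ 2 := sq_nonneg _
        have h2' : ((k:ℝ) + 2) / ((k:ℝ) + 3) * ‖z (k + 2) - z (k + 1)‖ ^ 2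
            ≤ ‖z (k + 2) - z (k + 1)‖ ^ 2 := by
          nlinarith [mul_le_mul_of_nonneg_right h1 hnn]
        exact mul_le_mul_of_nonneg_left h2' (by positivity)
      -- apply the arithmetic lemma
      have h1 := hstep (k + 1) (z (k + 2)) (hzQ (k + 2))
      have h3 := hlf_lb (x (k + 1)) (hxQ (k + 1)) (xhat k) (hxhatQ k)
      have key := fgm_step_arith Sk Sk1 (lam (k + 1))
        (((k : ℝ) + 1) * ((k : ℝ) + 2) * ((k : ℝ) + 3) / 12) Lc
        (‖z (k + 2) - z (k + 1)‖ ^ 2)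
        (Sk1 * (lam (k + 1) / Sk1) ^ 2 * ‖z (k + 2) - z (k + 1)‖ ^ 2)
        (ψ (k + 1) (z (k + 1))) (ψ (k + 2) (z (k + 2)))
        (f (xhat k)) (f (xhat (k + 1)))
        (lf (x (k + 1)) (xhat k)) (lf (x (k + 1)) (xhat (k + 1)))
        (lf (x (k + 1)) (z (k + 2))) δc
        hSkpos.le hδc h1 (by rw [hSk, hSval k]; exact ih) h3 h4 h5 hN'
      have hC : ((k : ℝ) + 1) * ((k : ℝ) + 2) * ((k : ℝ) + 3) / 12 + Sk1
          = (((k:ℝ) + 1) + 1) * (((k:ℝ) + 1) + 2) * (((k:ℝ) + 1) + 3) / 12 := by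
        rw [hSk1, hSval (k + 1)]
        push_cast
        ring
      rw [hC] at key
      have hS1 : Sk1 = (((k:ℝ) + 1) + 1) * (((k:ℝ) + 1) + 2) / 4 := by
        rw [hSk1, hSval (k + 1)]; push_cast; ring
      rw [hS1] at key
      push_cast
      linarith [key]
  -- upper bound from Property 1 (iii)
  have hub : ∀ k : ℕ, ψ (k + 1) (z (k + 1))
      ≤ ((k : ℝ) + 1) * ((k : ℝ) + 2) / 4 * f xs
        + Lc / σ * (d (z (k + 1)) + d' (z (k + 1)) (xs - z (k + 1))) := by
    intro k
    have h := hP3 k xs hxsQ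
    rw [hβL (k + 1)] at h
    refine h.trans ?_
    have h1 : (∑ i ∈ Finset.range (k + 1), lam i * lf (x i) xs)
        ≤ ∑ i ∈ Finset.range (k + 1), lam i * f xs :=
      Finset.sum_le_sum fun i _ =>
        mul_le_mul_of_nonneg_left (hlf_lb (x i) (hxQ i) xs hxsQ) (hlam i).le
    have h2 : (∑ i ∈ Finset.range (k + 1), lam i * f xs)
        = ((k : ℝ) + 1) * ((k : ℝ) + 2) / 4 * f xs := by
      rw [← Finset.sum_mul, hSval k]
    linarith
  -- Part 1: the convergence rate
  have part1 : ∀ k : ℕ,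
      f (xhat k) - f xs ≤
        4 * Lc * (d (z (k + 1)) + d' (z (k + 1)) (xs - z (k + 1)))
          / (σ * ((k : ℝ) + 1) * ((k : ℝ) + 2)) + ((k : ℝ) + 3) / 3 * δc := by
    intro k
    have hm := hmain k
    have hu := hub k
    set D : ℝ := d (z (k + 1)) + d' (z (k + 1)) (xs - z (k + 1)) with hD
    have hSkpos : (0:ℝ) < ((k : ℝ) + 1) * ((k : ℝ) + 2) / 4 := by positivity
    have key : (f (xhat k) - f xs) * (((k : ℝ) + 1) * ((k : ℝ) + 2) / 4)
        ≤ Lc / σ * D + ((k : ℝ) + 1) * ((k : ℝ) + 2) * ((k : ℝ) + 3) / 12 * δc := by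
      nlinarith [hm, hu]
    have h2 : f (xhat k) - f xs
        ≤ (Lc / σ * D + ((k : ℝ) + 1) * ((k : ℝ) + 2) * ((k : ℝ) + 3) / 12 * δc)
          / (((k : ℝ) + 1) * ((k : ℝ) + 2) / 4) := by
      rw [le_div_iff₀ hSkpos]
      linarith
    have h3 : (Lc / σ * D + ((k : ℝ) + 1) * ((k : ℝ) + 2) * ((k : ℝ) + 3) / 12 * δc)
          / (((k : ℝ) + 1) * ((k : ℝ) + 2) / 4)
        = 4 * Lc * D / (σ * ((k : ℝ) + 1) * ((k : ℝ) + 2)) + ((k : ℝ) + 3) / 3 * δc := by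
      have e1 : ((k:ℝ) + 1) ≠ 0 := by positivity
      have e2 : ((k:ℝ) + 2) ≠ 0 := by positivity
      field_simp
      ring
    rw [h3] at h2
    exact h2
  -- bound on ‖z (k+1) - xs‖²
  have hzb : ∀ k : ℕ, ‖z (k + 1) - xs‖ ^ 2
      ≤ 2 * d xs / σ + δc / (6 * Lc) * (((k:ℝ) + 1) * ((k:ℝ) + 2) * ((k:ℝ) + 3)) := by
    intro k
    have hm := hmain k
    have hu := hub k
    have hopt := mul_le_mul_of_nonneg_left (hxs_opt (xhat k) (hxhatQ k))
      (by positivity : (0:ℝ) ≤ ((k : ℝ) + 1) * ((k : ℝ) + 2) / 4)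
    have hpos : 0 ≤ Lc / σ * (d (z (k + 1)) + d' (z (k + 1)) (xs - z (k + 1)))
        + ((k : ℝ) + 1) * ((k : ℝ) + 2) * ((k : ℝ) + 3) / 12 * δc := by
      nlinarith [hm, hu, hopt]
    have hb := hBreg (z (k + 1)) (hzQ (k + 1)) xs hxsQ
    have hb' : d (z (k + 1)) + d' (z (k + 1)) (xs - z (k + 1))
        ≤ d xs - σ / 2 * ‖xs - z (k + 1)‖ ^ 2 := by linarith
    have h3 := mul_le_mul_of_nonneg_left hb' (div_nonneg hLc.le hσ.le)
    have e1 : Lc / σ * (d xs - σ / 2 * ‖xs - z (k + 1)‖ ^ 2)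
        = Lc / σ * d xs - Lc / 2 * ‖xs - z (k + 1)‖ ^ 2 := by
      field_simp
    rw [e1] at h3
    have key : Lc / 2 * ‖xs - z (k + 1)‖ ^ 2
        ≤ Lc / σ * d xs + ((k : ℝ) + 1) * ((k : ℝ) + 2) * ((k : ℝ) + 3) / 12 * δc := by
      linarith
    have hrev : ‖z (k + 1) - xs‖ = ‖xs - z (k + 1)‖ := norm_sub_rev _ _
    rw [hrev]
    have h2 : ‖xs - z (k + 1)‖ ^ 2
        ≤ (Lc / σ * d xs + ((k : ℝ) + 1) * ((k : ℝ) + 2) * ((k : ℝ) + 3) / 12 * δc)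
          / (Lc / 2) := by
      rw [le_div_iff₀ (by positivity)]
      linarith
    have h3' : (Lc / σ * d xs + ((k : ℝ) + 1) * ((k : ℝ) + 2) * ((k : ℝ) + 3) / 12 * δc)
          / (Lc / 2)
        = 2 * d xs / σ + δc / (6 * Lc) * (((k:ℝ) + 1) * ((k:ℝ) + 2) * ((k:ℝ) + 3)) := by
      field_simp
      ring
    rw [h3'] at h2
    exact h2
  have hdxs : 0 ≤ d xs := hd_nonneg xs hxsQ
  -- bound on ‖z 0 - xs‖²
  have hz0 : ‖z 0 - xs‖ ^ 2 ≤ 2 * d xs / σ := by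
    have hmin : IsMinOn d Q x₀ := by
      intro u hu
      simp only [Set.mem_setOf_eq, hdx₀]
      exact hd_nonneg u hu
    have hcone : xs - x₀ ∈ posTangentConeAt Q x₀ :=
      sub_mem_posTangentConeAt_of_segment_subset (hQcv.segment_subset hx₀Q hxsQ)
    have hgrad : 0 ≤ d' x₀ (xs - x₀) :=
      hmin.localize.hasFDerivWithinAt_nonneg (hd_diff x₀ hx₀Q) hcone
    have hb := hBreg (z 0) (hzQ 0) xs hxsQ
    rw [hP1b] at hb
    rw [hP1b, norm_sub_rev, le_div_iff₀ hσ]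
    nlinarith [hb, hgrad, hdx₀]
  -- unified bound for all z n
  have hzball : ∀ n : ℕ, ‖z n - xs‖ ^ 2
      ≤ 2 * d xs / σ + δc / (6 * Lc) * ((n : ℝ) * ((n : ℝ) + 1) * ((n : ℝ) + 2)) := by
    intro n
    cases n with
    | zero => simpa using hz0
    | succ k =>
      have h := hzb k
      push_cast
      linarith [h]
  -- monotone version for z (i+1), i ≤ k
  have hzmonob : ∀ i k : ℕ, i ≤ k → ‖z (i + 1) - xs‖ ^ 2
      ≤ 2 * d xs / σ + δc / (6 * Lc) * (((k:ℝ) + 1) * ((k:ℝ) + 2) * ((k:ℝ) + 3)) := by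
    intro i k hik
    refine (hzb i).trans ?_
    have hik' : (i : ℝ) ≤ (k : ℝ) := Nat.cast_le.mpr hik
    have hi0 : (0:ℝ) ≤ (i : ℝ) := Nat.cast_nonneg i
    have hP : ((i:ℝ) + 1) * ((i:ℝ) + 2) * ((i:ℝ) + 3)
        ≤ ((k:ℝ) + 1) * ((k:ℝ) + 2) * ((k:ℝ) + 3) := by
      gcongr <;> linarith
    have := mul_le_mul_of_nonneg_left hP (by positivity : (0:ℝ) ≤ δc / (6 * Lc))
    linarith
  have hRnn : ∀ k : ℕ, 0 ≤ 2 * d xs / σ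
      + δc / (6 * Lc) * (((k:ℝ) + 1) * ((k:ℝ) + 2) * ((k:ℝ) + 3)) := by
    intro k
    have : (0:ℝ) ≤ 2 * d xs / σ := by positivity
    have h2 : (0:ℝ) ≤ δc / (6 * Lc) * (((k:ℝ) + 1) * ((k:ℝ) + 2) * ((k:ℝ) + 3)) := by
      positivity
    linarith
  -- bound for xhat k
  have hxhatb : ∀ k : ℕ, ‖xhat k - xs‖ ^ 2 ≤ 2 * d xs / σ
      + δc / (6 * Lc) * (((k:ℝ) + 1) * ((k:ℝ) + 2) * ((k:ℝ) + 3)) := by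
    intro k
    rw [hxhat_comb k]
    refine fgm_comb_sq_bound _ _ _ _ _ (hRnn k)
      (fun i _ => div_nonneg (hlam i).le (hSpos k).le) (hwsum k) ?_
    intro i hi
    exact hzmonob i k (Nat.lt_succ_iff.mp (Finset.mem_range.mp hi))
  -- bound for x n
  have hxb : ∀ n : ℕ, ‖x n - xs‖ ^ 2 ≤ 2 * d xs / σ
      + δc / (6 * Lc) * ((n : ℝ) * ((n : ℝ) + 1) * ((n : ℝ) + 2)) := by
    intro n
    cases n with
    | zero => rw [hmx0]; simpa using hz0
    | succ k =>
      have hx_comb : x (k + 1) = ∑ i ∈ Finset.range (k + 2),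
          (lam i / ∑ j ∈ Finset.range (k + 2), lam j) •
            (if i = k + 1 then z (k + 1) else z (i + 1)) := by
        rw [hmx k]
        have h1 : (∑ i ∈ Finset.range (k + 2),
            lam i • (if i = k + 1 then z (k + 1) else z (i + 1)))
            = (∑ i ∈ Finset.range (k + 1), lam i • z (i + 1)) + lam (k + 1) • z (k + 1) := by
          rw [Finset.sum_range_succ]
          congr 1
          · refine Finset.sum_congr rfl fun i hi => ?_
            rw [if_neg (Nat.ne_of_lt (Finset.mem_range.mp hi))]
          · rw [if_pos rfl]
        rw [← h1, Finset.smul_sum]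
        exact Finset.sum_congr rfl fun i _ => by rw [smul_smul, ← div_eq_inv_mul]
      rw [hx_comb]
      have hbnd : ∀ i ∈ Finset.range (k + 2),
          ‖(if i = k + 1 then z (k + 1) else z (i + 1)) - xs‖ ^ 2
          ≤ 2 * d xs / σ
            + δc / (6 * Lc) * (((k:ℝ) + 1) * ((k:ℝ) + 2) * ((k:ℝ) + 3)) := by
        intro i hi
        by_cases h : i = k + 1
        · rw [if_pos h]
          have := hzball (k + 1)
          push_cast at this
          linarith
        · rw [if_neg h]
          have hi' := Finset.mem_range.mp hi
          exact hzmonob i k (by omega)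
      have := fgm_comb_sq_bound (Finset.range (k + 2)) _ _ xs _ (hRnn k)
        (fun i _ => div_nonneg (hlam i).le (hSpos (k + 1)).le) (hwsum (k + 1)) hbnd
      push_cast
      linarith [this]
  exact ⟨part1, fun n => ⟨⟨hzQ n, hzball n⟩, ⟨hxQ n, hxb n⟩⟩,
    fun k => ⟨hxhatQ k, by
      have := hxhatb k
      linarith [this]⟩⟩
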